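/- (Lemma 4.3) Let G=(V,E) be a locally finite graph with μ(x)≥μ0>0 and h1(x)≥h0>0, h2(x)≥h0>0 for all x∈V, p,q≥2, and F:V×ℝ²→ℝ with |F(x,s,t)| ≤ a(|(s,t)|)b(x) for a continuous a:[0,∞)→[0,∞) and b:V→[0,∞) with ∑μ(x)b(x)<∞. Suppose there exist α∈[0,p), β∈[0,q), bounded functions f1,f2:V→ℝ and g:V→ℝ with ∑_{x∈V}μ(x)|g(x)|<∞ such that F(x,s,t) ≤ f1(x)|s|^α + f2(x)|t|^β + g(x) for all (x,s,t)∈V×ℝ². Then for each λ>0 the functional Φ̄ − λΨ̄ is coercive on W^{1,p}(V)×W^{1,q}(V): for every K∈ℝ there exists R>0 such that ‖u‖_{W^{1,p}} + ‖v‖_{W^{1,q}} ≥ R implies Φ̄(u,v) − λΨ̄(u,v) ≥ K. -/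

import Mathlib

open Real

noncomputable section

variable {V : Type*}

/-- The bilinear form Γ on a locally finite graph. -/
def lgam (w : V → V → ℝ) (μ : V → ℝ) (u v : V → ℝ) (x : V) : ℝ :=
  (1 / (2 * μ x)) * ∑' y, w x y * (u y - u x) * (v y - v x)

/-- Length of the gradient: `|∇u|(x) = √(Γ(u,u)(x))`. -/
def lgnorm (w : V → V → ℝ) (μ : V → ℝ) (u : V → ℝ) (x : V) : ℝ :=
  Real.sqrt (lgam w μ u u x)

/-- Degree of a vertex. -/
def ldeg (w : V → V → ℝ) (x : V) : ℝ := ∑' y, w x y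

/-- Membership in the Sobolev space `W^{1,l}(V)` (with weight `h`). -/
def memW1 (w : V → V → ℝ) (μ h : V → ℝ) (l : ℝ) (u : V → ℝ) : Prop :=
  Summable (fun x => μ x * (lgnorm w μ u x ^ l + h x * |u x| ^ l))

/-- The Sobolev norm `‖u‖_{W^{1,l}}` (with weight `h`). -/
def w1norm (w : V → V → ℝ) (μ h : V → ℝ) (l : ℝ) (u : V → ℝ) : ℝ :=
  (∑' x, μ x * (lgnorm w μ u x ^ l + h x * |u x| ^ l)) ^ (1 / l)

/-- The functional Φ̄. -/
def PhiL (w : V → V → ℝ) (μ h1 h2 : V → ℝ) (p q : ℝ) (u v : V → ℝ) : ℝ :=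
  (1 / p) * w1norm w μ h1 p u ^ p + (1 / q) * w1norm w μ h2 q v ^ q

/-- The functional Ψ̄. -/
def PsiL (μ : V → ℝ) (F : V → ℝ → ℝ → ℝ) (u v : V → ℝ) : ℝ :=
  ∑' x, μ x * F x (u x) (v x)

end


/-- Young-type inequality: `t^α ≤ ε t^p + C_ε` for `0 ≤ α < p`. -/
lemma aux_young (α p ε t : ℝ) (hα : 0 ≤ α) (hαp : α < p) (hε : 0 < ε) (ht : 0 ≤ t) :
    t ^ α ≤ ε * t ^ p + ((1/ε) ^ (1/(p - α))) ^ α := by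
  have hpα : 0 < p - α := by linarith
  by_cases hcase : (1/ε) ^ (1/(p - α)) ≤ t
  · have ht0 : 0 < t := lt_of_lt_of_le (Real.rpow_pos_of_pos (by positivity) _) hcase
    have h1 : 1/ε ≤ t ^ (p - α) := by
      have : ((1/ε) ^ (1/(p - α))) ^ (p - α) ≤ t ^ (p - α) :=
        Real.rpow_le_rpow (Real.rpow_nonneg (by positivity) _) hcase hpα.le
      rwa [← Real.rpow_mul (by positivity), one_div (p - α), inv_mul_cancel₀ hpα.ne',
        Real.rpow_one] at this
    have h2 : t ^ p = t ^ α * t ^ (p - α) := by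
      rw [← Real.rpow_add ht0]; ring_nf
    have h3 : t ^ α * (1/ε) ≤ t ^ α * t ^ (p - α) :=
      mul_le_mul_of_nonneg_left h1 (Real.rpow_nonneg ht α)
    have h4 : 0 ≤ ((1/ε) ^ (1/(p - α))) ^ α :=
      Real.rpow_nonneg (Real.rpow_nonneg (by positivity) _) _
    rw [h2]
    have h5 := mul_le_mul_of_nonneg_left h3 hε.le
    have h6 : ε * (t ^ α * (1/ε)) = t ^ α := by field_simp
    nlinarith
  · push_neg at hcase
    have : t ^ α ≤ ((1/ε) ^ (1/(p - α))) ^ α := Real.rpow_le_rpow ht hcase.le hα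
    nlinarith [mul_nonneg hε.le (Real.rpow_nonneg ht p)]

/-- Basic facts about a `W^{1,p}` function. -/
lemma aux_w1 {V : Type*} [Countable V] (w : V → V → ℝ) (μ h : V → ℝ) (hμ : ∀ x, 0 < μ x)
    (μ0 h0 : ℝ) (hμ0 : 0 < μ0) (hμ0le : ∀ x, μ0 ≤ μ x) (hh0 : 0 < h0) (hh : ∀ x, h0 ≤ h x)
    (p : ℝ) (hp : 0 < p) (u : V → ℝ) (hu : memW1 w μ h p u) :
    Summable (fun x => μ x * |u x| ^ p) ∧
    h0 * (∑' x, μ x * |u x| ^ p) ≤ (w1norm w μ h p u) ^ p ∧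
    (∀ x, |u x| ≤ ((w1norm w μ h p u) ^ p / (h0 * μ0)) ^ (1/p)) ∧
    0 ≤ w1norm w μ h p u := by
  set S := ∑' x, μ x * (lgnorm w μ u x ^ p + h x * |u x| ^ p) with hSdef
  have hterm : ∀ x, 0 ≤ μ x * (lgnorm w μ u x ^ p + h x * |u x| ^ p) := by
    intro x
    have h1 : 0 ≤ lgnorm w μ u x ^ p := Real.rpow_nonneg (Real.sqrt_nonneg _) _
    have h2 : 0 ≤ |u x| ^ p := Real.rpow_nonneg (abs_nonneg _) _
    have h3 : (0:ℝ) ≤ h x := le_trans hh0.le (hh x)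
    exact mul_nonneg (hμ x).le (by nlinarith)
  have hS0 : 0 ≤ S := tsum_nonneg hterm
  have hw1 : (w1norm w μ h p u) ^ p = S := by
    rw [w1norm, ← hSdef, ← Real.rpow_mul hS0, one_div, inv_mul_cancel₀ hp.ne', Real.rpow_one]
  have hsum1 : Summable (fun x => μ x * (h x * |u x| ^ p)) := by
    apply Summable.of_nonneg_of_le _ _ hu
    · intro x
      have h2 : 0 ≤ |u x| ^ p := Real.rpow_nonneg (abs_nonneg _) _
      exact mul_nonneg (hμ x).le (mul_nonneg (le_trans hh0.le (hh x)) h2)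
    · intro x
      have h1 : 0 ≤ lgnorm w μ u x ^ p := Real.rpow_nonneg (Real.sqrt_nonneg _) _
      nlinarith [(hμ x).le, mul_nonneg (hμ x).le h1]
  have hsum2 : Summable (fun x => μ x * |u x| ^ p) := by
    apply Summable.of_nonneg_of_le _ _ (hsum1.mul_left (1/h0))
    · intro x
      exact mul_nonneg (hμ x).le (Real.rpow_nonneg (abs_nonneg _) _)
    · intro x
      have h2 : 0 ≤ |u x| ^ p := Real.rpow_nonneg (abs_nonneg _) _
      have hmain : h0 * (μ x * |u x| ^ p) ≤ μ x * (h x * |u x| ^ p) := by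
        nlinarith [mul_nonneg (hμ x).le h2, hh x]
      calc μ x * |u x| ^ p = (1/h0) * (h0 * (μ x * |u x| ^ p)) := by field_simp
        _ ≤ (1/h0) * (μ x * (h x * |u x| ^ p)) :=
            mul_le_mul_of_nonneg_left hmain (by positivity)
  refine ⟨hsum2, ?_, ?_, Real.rpow_nonneg hS0 _⟩
  · rw [hw1, ← tsum_mul_left]
    apply Summable.tsum_le_tsum _ ((hsum2).mul_left h0) hu
    intro x
    have h1 : 0 ≤ lgnorm w μ u x ^ p := Real.rpow_nonneg (Real.sqrt_nonneg _) _
    have h2 : 0 ≤ |u x| ^ p := Real.rpow_nonneg (abs_nonneg _) _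
    nlinarith [mul_nonneg (hμ x).le h1, mul_nonneg (hμ x).le h2, hh x]
  · intro x
    have h2 : 0 ≤ |u x| ^ p := Real.rpow_nonneg (abs_nonneg _) _
    have h1 : 0 ≤ lgnorm w μ u x ^ p := Real.rpow_nonneg (Real.sqrt_nonneg _) _
    have hle : μ x * (lgnorm w μ u x ^ p + h x * |u x| ^ p) ≤ S :=
      Summable.le_tsum hu x (fun y _ => hterm y)
    have hkey : h0 * μ0 * |u x| ^ p ≤ S := by
      have e1 : h0 * μ0 ≤ h x * μ x :=
        mul_le_mul (hh x) (hμ0le x) hμ0.le (le_trans hh0.le (hh x))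
      nlinarith [mul_le_mul_of_nonneg_right e1 h2, mul_nonneg (hμ x).le h1]
    have hup : |u x| ^ p ≤ S / (h0 * μ0) := by
      rw [le_div_iff₀ (by positivity)]; nlinarith
    calc |u x| = (|u x| ^ p) ^ (1/p) := by
          rw [one_div, Real.rpow_rpow_inv (abs_nonneg _) hp.ne']
      _ ≤ (S / (h0 * μ0)) ^ (1/p) := Real.rpow_le_rpow h2 hup (by positivity)
      _ = ((w1norm w μ h p u) ^ p / (h0 * μ0)) ^ (1/p) := by rw [hw1]

/-- Lemma 4.3: coercivity of `Φ̄ − λΨ̄` on a locally finite graph. -/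
theorem stmt16 {V : Type*} [Countable V]
    (w : V → V → ℝ) (μ : V → ℝ)
    (hw_symm : ∀ x y, w x y = w y x) (hw_nonneg : ∀ x y, 0 ≤ w x y)
    (hw_diag : ∀ x, w x x = 0) (hlocfin : ∀ x, {y | 0 < w x y}.Finite)
    (hμ : ∀ x, 0 < μ x)
    (μ0 : ℝ) (hμ0 : 0 < μ0) (hμ0le : ∀ x, μ0 ≤ μ x)
    (h0 : ℝ) (hh0 : 0 < h0)
    (h1 h2 : V → ℝ) (hh1pos : ∀ x, 0 < h1 x) (hh2pos : ∀ x, 0 < h2 x)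
    (hh1 : ∀ x, h0 ≤ h1 x) (hh2 : ∀ x, h0 ≤ h2 x)
    (p q : ℝ) (hp : 2 ≤ p) (hq : 2 ≤ q)
    (F : V → ℝ → ℝ → ℝ)
    (a : ℝ → ℝ) (ha : ContinuousOn a (Set.Ici 0)) (ha0 : ∀ τ ∈ Set.Ici (0:ℝ), 0 ≤ a τ)
    (b : V → ℝ) (hb : ∀ x, 0 ≤ b x) (hbsum : Summable (fun x => μ x * b x))
    (hFbound : ∀ x s t, |F x s t| ≤ a (Real.sqrt (s ^ 2 + t ^ 2)) * b x)
    (α β : ℝ) (hα0 : 0 ≤ α) (hαp : α < p) (hβ0 : 0 ≤ β) (hβq : β < q)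
    (f1 f2 g : V → ℝ)
    (hf1bdd : ∃ C, ∀ x, |f1 x| ≤ C) (hf2bdd : ∃ C, ∀ x, |f2 x| ≤ C)
    (hgsum : Summable (fun x => μ x * |g x|))
    (hF2 : ∀ x s t, F x s t ≤ f1 x * |s| ^ α + f2 x * |t| ^ β + g x)
    (lam : ℝ) (hlam : 0 < lam) :
    ∀ K : ℝ, ∃ R : ℝ, 0 < R ∧ ∀ u v : V → ℝ,
      memW1 w μ h1 p u → memW1 w μ h2 q v →
      R ≤ w1norm w μ h1 p u + w1norm w μ h2 q v →
      K ≤ PhiL w μ h1 h2 p q u v - lam * PsiL μ F u v := by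
  intro K
  have hp0 : (0:ℝ) < p := by linarith
  have hq0 : (0:ℝ) < q := by linarith
  obtain ⟨C1', hC1'⟩ := hf1bdd
  obtain ⟨C2', hC2'⟩ := hf2bdd
  set C1 := max C1' 0 with hC1def
  set C2 := max C2' 0 with hC2def
  have hC1 : ∀ x, |f1 x| ≤ C1 := fun x => (hC1' x).trans (le_max_left _ _)
  have hC2 : ∀ x, |f2 x| ≤ C2 := fun x => (hC2' x).trans (le_max_left _ _)
  have hC10 : 0 ≤ C1 := le_max_right _ _
  have hC20 : 0 ≤ C2 := le_max_right _ _
  set C' := C1 + C2 + 1 with hC'def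
  have hC' : 0 < C' := by rw [hC'def]; linarith
  set c := min (1/(2*p)) (1/(2*q)) with hcdef
  have hc : 0 < c := lt_min (by positivity) (by positivity)
  have hcp : c ≤ 1/(2*p) := min_le_left _ _
  have hcq : c ≤ 1/(2*q) := min_le_right _ _
  obtain ⟨ε, hε, hεeq⟩ : ∃ ε : ℝ, 0 < ε ∧ lam * ε * C' = c * h0 :=
    ⟨c * h0 / (lam * C'), div_pos (mul_pos hc hh0) (mul_pos hlam hC'), by
      field_simp⟩
  set Cε1 := ((1/ε) ^ (1/(p - α))) ^ α with hCε1def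
  set Cε2 := ((1/ε) ^ (1/(q - β))) ^ β with hCε2def
  have hCε10 : 0 ≤ Cε1 := Real.rpow_nonneg (Real.rpow_nonneg (by positivity) _) _
  have hCε20 : 0 ≤ Cε2 := Real.rpow_nonneg (Real.rpow_nonneg (by positivity) _) _
  set Kε := C1 * Cε1 + C2 * Cε2 with hKεdef
  have hKε0 : 0 ≤ Kε := add_nonneg (mul_nonneg hC10 hCε10) (mul_nonneg hC20 hCε20)
  obtain ⟨T, hT1, hTp, hTq⟩ : ∃ T : ℝ, 1 ≤ T ∧ Kε ≤ ε * T ^ p ∧ Kε ≤ ε * T ^ q := by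
    refine ⟨max 1 (max ((Kε/ε) ^ (1/p)) ((Kε/ε) ^ (1/q))), le_max_left _ _, ?_, ?_⟩
    · have h1 : (Kε/ε) ^ (1/p) ≤ max 1 (max ((Kε/ε) ^ (1/p)) ((Kε/ε) ^ (1/q))) :=
        le_trans (le_max_left _ _) (le_max_right _ _)
      have h2 : Kε/ε = ((Kε/ε) ^ (1/p)) ^ p := by
        rw [one_div, Real.rpow_inv_rpow (by positivity) hp0.ne']
      have h3 : ((Kε/ε) ^ (1/p)) ^ p ≤ (max 1 (max ((Kε/ε) ^ (1/p)) ((Kε/ε) ^ (1/q)))) ^ p :=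
        Real.rpow_le_rpow (Real.rpow_nonneg (by positivity) _) h1 hp0.le
      have h4 : Kε/ε ≤ (max 1 (max ((Kε/ε) ^ (1/p)) ((Kε/ε) ^ (1/q)))) ^ p := h2.trans_le h3
      rw [div_le_iff₀ hε] at h4
      linarith
    · have h1 : (Kε/ε) ^ (1/q) ≤ max 1 (max ((Kε/ε) ^ (1/p)) ((Kε/ε) ^ (1/q))) :=
        le_trans (le_max_right _ _) (le_max_right _ _)
      have h2 : Kε/ε = ((Kε/ε) ^ (1/q)) ^ q := by
        rw [one_div, Real.rpow_inv_rpow (by positivity) hq0.ne']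
      have h3 : ((Kε/ε) ^ (1/q)) ^ q ≤ (max 1 (max ((Kε/ε) ^ (1/p)) ((Kε/ε) ^ (1/q)))) ^ q :=
        Real.rpow_le_rpow (Real.rpow_nonneg (by positivity) _) h1 hq0.le
      have h4 : Kε/ε ≤ (max 1 (max ((Kε/ε) ^ (1/p)) ((Kε/ε) ^ (1/q)))) ^ q := h2.trans_le h3
      rw [div_le_iff₀ hε] at h4
      linarith
  have hT0 : (0:ℝ) < T := lt_of_lt_of_le one_pos hT1
  -- max of a on [0, √2 * T]
  obtain ⟨z, hz, hzmax⟩ := isCompact_Icc.exists_isMaxOn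
    (⟨0, by constructor <;> [rfl; positivity]⟩ : (Set.Icc (0:ℝ) (Real.sqrt 2 * T)).Nonempty)
    (ha.mono Set.Icc_subset_Ici_self)
  set MT := a z with hMTdef
  have hMT0 : 0 ≤ MT := ha0 z hz.1
  set Sb := ∑' x, μ x * b x with hSbdef
  have hSb0 : 0 ≤ Sb := tsum_nonneg (fun x => mul_nonneg (hμ x).le (hb x))
  set Sg := ∑' x, μ x * |g x| with hSgdef
  have hSg0 : 0 ≤ Sg := tsum_nonneg (fun x => mul_nonneg (hμ x).le (abs_nonneg _))
  set D := lam * (MT * Sb + Sg) with hDdef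
  have hD0 : 0 ≤ D := mul_nonneg hlam.le (add_nonneg (mul_nonneg hMT0 hSb0) hSg0)
  obtain ⟨m, hm1, hmK⟩ : ∃ m : ℝ, 1 ≤ m ∧ K + D ≤ c * m ^ (2:ℝ) := by
    refine ⟨max 1 (Real.sqrt ((K + D)/c)), le_max_left _ _, ?_⟩
    have hm0 : (0:ℝ) ≤ max 1 (Real.sqrt ((K + D)/c)) :=
      le_trans zero_le_one (le_max_left _ _)
    have h22 : (max 1 (Real.sqrt ((K + D)/c))) ^ (2:ℝ)
        = (max 1 (Real.sqrt ((K + D)/c))) * (max 1 (Real.sqrt ((K + D)/c))) := by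
      rw [show (2:ℝ) = ((2:ℕ):ℝ) by norm_num, Real.rpow_natCast]; ring
    rcases le_or_gt (K + D) 0 with hneg | hpos
    · have : 0 ≤ c * (max 1 (Real.sqrt ((K + D)/c))) ^ (2:ℝ) :=
        mul_nonneg hc.le (Real.rpow_nonneg hm0 _)
      linarith
    · have hs : Real.sqrt ((K + D)/c) ≤ max 1 (Real.sqrt ((K + D)/c)) := le_max_right _ _
      have hsq : Real.sqrt ((K + D)/c) * Real.sqrt ((K + D)/c) = (K + D)/c :=
        Real.mul_self_sqrt (by positivity)
      have h5 : (K + D)/c ≤ (max 1 (Real.sqrt ((K + D)/c))) * (max 1 (Real.sqrt ((K + D)/c))) := by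
        calc (K + D)/c = Real.sqrt ((K + D)/c) * Real.sqrt ((K + D)/c) := hsq.symm
          _ ≤ (max 1 (Real.sqrt ((K + D)/c))) * (max 1 (Real.sqrt ((K + D)/c))) :=
            mul_le_mul hs hs (Real.sqrt_nonneg _) hm0
      rw [h22]
      rw [div_le_iff₀ hc] at h5
      linarith
  refine ⟨2 * m, by linarith, ?_⟩
  intro u v hu hv hR
  obtain ⟨hsU, hSU, hbdU, hNU0⟩ := aux_w1 w μ h1 hμ μ0 h0 hμ0 hμ0le hh0 hh1 p hp0 u hu
  obtain ⟨hsV, hSV, hbdV, hNV0⟩ := aux_w1 w μ h2 hμ μ0 h0 hμ0 hμ0le hh0 hh2 q hq0 v hv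
  set Nu := w1norm w μ h1 p u with hNudef
  set Nv := w1norm w μ h2 q v with hNvdef
  set Tu := ∑' x, μ x * |u x| ^ p with hTudef
  set Tv := ∑' x, μ x * |v x| ^ q with hTvdef
  have hNup0 : 0 ≤ Nu ^ p := Real.rpow_nonneg hNU0 p
  have hNvq0 : 0 ≤ Nv ^ q := Real.rpow_nonneg hNV0 q
  -- Summability of μ·F via the a-b bound
  have hFsum : Summable (fun x => μ x * F x (u x) (v x)) := by
    set Bu := ((Nu ^ p) / (h0 * μ0)) ^ (1/p) with hBudef
    set Bv := ((Nv ^ q) / (h0 * μ0)) ^ (1/q) with hBvdef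
    have hM10 : 0 ≤ Real.sqrt (Bu^2 + Bv^2) := Real.sqrt_nonneg _
    obtain ⟨z2, hz2, hz2max⟩ := isCompact_Icc.exists_isMaxOn
      (⟨0, by constructor <;> [rfl; exact hM10]⟩ :
        (Set.Icc (0:ℝ) (Real.sqrt (Bu^2 + Bv^2))).Nonempty)
      (ha.mono Set.Icc_subset_Ici_self)
    have habs : ∀ x, |μ x * F x (u x) (v x)| ≤ a z2 * (μ x * b x) := by
      intro x
      have hsle : Real.sqrt (u x ^ 2 + v x ^ 2) ≤ Real.sqrt (Bu^2 + Bv^2) := by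
        apply Real.sqrt_le_sqrt
        have e1 : u x ^ 2 ≤ Bu ^ 2 := by
          rw [← sq_abs]; exact pow_le_pow_left₀ (abs_nonneg _) (hbdU x) 2
        have e2 : v x ^ 2 ≤ Bv ^ 2 := by
          rw [← sq_abs]; exact pow_le_pow_left₀ (abs_nonneg _) (hbdV x) 2
        linarith
      have h2 : a (Real.sqrt (u x ^ 2 + v x ^ 2)) ≤ a z2 :=
        hz2max ⟨Real.sqrt_nonneg _, hsle⟩
      rw [abs_mul, abs_of_pos (hμ x)]
      calc μ x * |F x (u x) (v x)|
          ≤ μ x * (a (Real.sqrt (u x ^ 2 + v x ^ 2)) * b x) :=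
            mul_le_mul_of_nonneg_left (hFbound x (u x) (v x)) (hμ x).le
        _ ≤ μ x * (a z2 * b x) :=
            mul_le_mul_of_nonneg_left (mul_le_mul_of_nonneg_right h2 (hb x)) (hμ x).le
        _ = a z2 * (μ x * b x) := by ring
    exact Summable.of_abs
      (Summable.of_nonneg_of_le (fun x => abs_nonneg _) habs (hbsum.mul_left (a z2)))
  -- pointwise bound F ≤ G
  have hpoint : ∀ x, F x (u x) (v x) ≤ MT * b x + ε * C' * (|u x| ^ p + |v x| ^ q) + |g x| := by
    intro x
    have hup : 0 ≤ |u x| ^ p := Real.rpow_nonneg (abs_nonneg _) _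
    have hvq : 0 ≤ |v x| ^ q := Real.rpow_nonneg (abs_nonneg _) _
    by_cases hcase : |u x| ≤ T ∧ |v x| ≤ T
    · have e1 : u x ^ 2 ≤ T ^ 2 := by
        rw [← sq_abs]; exact pow_le_pow_left₀ (abs_nonneg _) hcase.1 2
      have e2 : v x ^ 2 ≤ T ^ 2 := by
        rw [← sq_abs]; exact pow_le_pow_left₀ (abs_nonneg _) hcase.2 2
      have hs1 : Real.sqrt (u x ^ 2 + v x ^ 2) ≤ Real.sqrt 2 * T := by
        calc Real.sqrt (u x ^ 2 + v x ^ 2) ≤ Real.sqrt (2 * T ^ 2) :=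
              Real.sqrt_le_sqrt (by linarith)
          _ = Real.sqrt 2 * T := by
              rw [Real.sqrt_mul (by norm_num), Real.sqrt_sq hT0.le]
      have h2 : a (Real.sqrt (u x ^ 2 + v x ^ 2)) ≤ MT :=
        hzmax ⟨Real.sqrt_nonneg _, hs1⟩
      have hFle : F x (u x) (v x) ≤ MT * b x :=
        calc F x (u x) (v x) ≤ |F x (u x) (v x)| := le_abs_self _
          _ ≤ a (Real.sqrt (u x ^ 2 + v x ^ 2)) * b x := hFbound x (u x) (v x)
          _ ≤ MT * b x := mul_le_mul_of_nonneg_right h2 (hb x)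
      have hεC : 0 ≤ ε * C' * (|u x| ^ p + |v x| ^ q) :=
        mul_nonneg (mul_nonneg hε.le hC'.le) (add_nonneg hup hvq)
      linarith [abs_nonneg (g x)]
    · rw [not_and_or, not_le, not_le] at hcase
      have hKle : Kε ≤ ε * (|u x| ^ p + |v x| ^ q) := by
        rcases hcase with hcu | hcv
        · have e3 : T ^ p ≤ |u x| ^ p := Real.rpow_le_rpow hT0.le hcu.le hp0.le
          have e4 : ε * T ^ p ≤ ε * |u x| ^ p := mul_le_mul_of_nonneg_left e3 hε.le
          have e5 : 0 ≤ ε * |v x| ^ q := mul_nonneg hε.le hvq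
          have e6 : ε * (|u x| ^ p + |v x| ^ q) = ε * |u x| ^ p + ε * |v x| ^ q := by ring
          linarith
        · have e3 : T ^ q ≤ |v x| ^ q := Real.rpow_le_rpow hT0.le hcv.le hq0.le
          have e4 : ε * T ^ q ≤ ε * |v x| ^ q := mul_le_mul_of_nonneg_left e3 hε.le
          have e5 : 0 ≤ ε * |u x| ^ p := mul_nonneg hε.le hup
          have e6 : ε * (|u x| ^ p + |v x| ^ q) = ε * |u x| ^ p + ε * |v x| ^ q := by ring
          linarith
      have hy1 : |u x| ^ α ≤ ε * |u x| ^ p + Cε1 :=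
        aux_young α p ε _ hα0 hαp hε (abs_nonneg _)
      have hy2 : |v x| ^ β ≤ ε * |v x| ^ q + Cε2 :=
        aux_young β q ε _ hβ0 hβq hε (abs_nonneg _)
      have hupα : 0 ≤ |u x| ^ α := Real.rpow_nonneg (abs_nonneg _) _
      have hvqβ : 0 ≤ |v x| ^ β := Real.rpow_nonneg (abs_nonneg _) _
      have hf1le : f1 x * |u x| ^ α ≤ C1 * |u x| ^ α :=
        mul_le_mul_of_nonneg_right (le_trans (le_abs_self _) (hC1 x)) hupα
      have hf2le : f2 x * |v x| ^ β ≤ C2 * |v x| ^ β :=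
        mul_le_mul_of_nonneg_right (le_trans (le_abs_self _) (hC2 x)) hvqβ
      have hstep1 : F x (u x) (v x) ≤ C1 * |u x| ^ α + C2 * |v x| ^ β + |g x| := by
        have := hF2 x (u x) (v x)
        have := le_abs_self (g x)
        linarith
      have hstep2 : C1 * |u x| ^ α + C2 * |v x| ^ β
          ≤ ε * C1 * |u x| ^ p + ε * C2 * |v x| ^ q + Kε := by
        have e4 := mul_le_mul_of_nonneg_left hy1 hC10
        have e5 := mul_le_mul_of_nonneg_left hy2 hC20
        have e6 : C1 * (ε * |u x| ^ p + Cε1) = ε * C1 * |u x| ^ p + C1 * Cε1 := by ring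
        have e7 : C2 * (ε * |v x| ^ q + Cε2) = ε * C2 * |v x| ^ q + C2 * Cε2 := by ring
        linarith [hKεdef]
      have hstep3 : ε * C1 * |u x| ^ p + ε * C2 * |v x| ^ q + ε * (|u x| ^ p + |v x| ^ q)
          ≤ ε * C' * (|u x| ^ p + |v x| ^ q) := by
        have e8 : ε * C' * (|u x| ^ p + |v x| ^ q)
            = ε * C1 * |u x| ^ p + ε * C1 * |v x| ^ q + ε * C2 * |u x| ^ p
              + ε * C2 * |v x| ^ q + ε * |u x| ^ p + ε * |v x| ^ q := by
          rw [hC'def]; ring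
        have e9 : ε * (|u x| ^ p + |v x| ^ q) = ε * |u x| ^ p + ε * |v x| ^ q := by ring
        linarith [mul_nonneg (mul_nonneg hε.le hC10) hvq,
          mul_nonneg (mul_nonneg hε.le hC20) hup]
      linarith [hstep1, hstep2, hstep3, hKle, mul_nonneg hMT0 (hb x)]
  -- summable majorant and tsum comparison
  have hGsum : Summable (fun x => MT * (μ x * b x)
      + (ε * C' * (μ x * |u x| ^ p) + (ε * C' * (μ x * |v x| ^ q) + μ x * |g x|))) :=
    (hbsum.mul_left MT).add ((hsU.mul_left (ε * C')).add ((hsV.mul_left (ε * C')).add hgsum))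
  have hPsi : PsiL μ F u v ≤ MT * Sb + (ε * C' * Tu + (ε * C' * Tv + Sg)) := by
    have h1 : PsiL μ F u v ≤ ∑' x, (MT * (μ x * b x)
        + (ε * C' * (μ x * |u x| ^ p) + (ε * C' * (μ x * |v x| ^ q) + μ x * |g x|))) := by
      simp only [PsiL]
      apply Summable.tsum_le_tsum _ hFsum hGsum
      intro x
      calc μ x * F x (u x) (v x)
          ≤ μ x * (MT * b x + ε * C' * (|u x| ^ p + |v x| ^ q) + |g x|) :=
            mul_le_mul_of_nonneg_left (hpoint x) (hμ x).le
        _ = MT * (μ x * b x)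
            + (ε * C' * (μ x * |u x| ^ p) + (ε * C' * (μ x * |v x| ^ q) + μ x * |g x|)) := by
            ring
    rw [Summable.tsum_add (hbsum.mul_left MT) ((hsU.mul_left (ε * C')).add
        ((hsV.mul_left (ε * C')).add hgsum)),
      Summable.tsum_add (hsU.mul_left (ε * C')) ((hsV.mul_left (ε * C')).add hgsum),
      Summable.tsum_add (hsV.mul_left (ε * C')) hgsum,
      tsum_mul_left, tsum_mul_left, tsum_mul_left] at h1
    exact h1
  -- assemble
  have hΦ : PhiL w μ h1 h2 p q u v = (1/p) * Nu ^ p + (1/q) * Nv ^ q := rfl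
  have hTu0 : 0 ≤ Tu := tsum_nonneg
    (fun x => mul_nonneg (hμ x).le (Real.rpow_nonneg (abs_nonneg _) _))
  have hTv0 : 0 ≤ Tv := tsum_nonneg
    (fun x => mul_nonneg (hμ x).le (Real.rpow_nonneg (abs_nonneg _) _))
  have hlamPsi : lam * PsiL μ F u v ≤ D + c * Nu ^ p + c * Nv ^ q := by
    have h1 := mul_le_mul_of_nonneg_left hPsi hlam.le
    have e1 : lam * (ε * C' * Tu) = c * (h0 * Tu) := by
      have : lam * (ε * C' * Tu) = (lam * ε * C') * Tu := by ring
      rw [this, hεeq]; ring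
    have e2 : lam * (ε * C' * Tv) = c * (h0 * Tv) := by
      have : lam * (ε * C' * Tv) = (lam * ε * C') * Tv := by ring
      rw [this, hεeq]; ring
    have e3 : c * (h0 * Tu) ≤ c * Nu ^ p := mul_le_mul_of_nonneg_left hSU hc.le
    have e4 : c * (h0 * Tv) ≤ c * Nv ^ q := mul_le_mul_of_nonneg_left hSV hc.le
    have hDd : lam * (MT * Sb + (ε * C' * Tu + (ε * C' * Tv + Sg)))
        = D + lam * (ε * C' * Tu) + lam * (ε * C' * Tv) := by
      rw [hDdef]; ring
    rw [hDd] at h1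
    linarith
  -- lower bound on the norms
  have hmcase : m ≤ Nu ∨ m ≤ Nv := by
    by_contra hcon
    push_neg at hcon
    have := hR
    linarith [hcon.1, hcon.2]
  have hfin : K + D ≤ c * Nu ^ p + c * Nv ^ q := by
    have key : ∀ N l : ℝ, 2 ≤ l → 0 ≤ N → m ≤ N → c * m ^ (2:ℝ) ≤ c * N ^ l := by
      intro N l hl hN hmN
      have hN1 : 1 ≤ N := le_trans hm1 hmN
      have h2l : N ^ (2:ℝ) ≤ N ^ l := Real.rpow_le_rpow_of_exponent_le hN1 hl
      have hm2 : m ^ (2:ℝ) ≤ N ^ (2:ℝ) :=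
        Real.rpow_le_rpow (by linarith) hmN (by norm_num)
      exact mul_le_mul_of_nonneg_left (le_trans hm2 h2l) hc.le
    rcases hmcase with hmN | hmN
    · have := key Nu p hp hNU0 hmN
      linarith [mul_nonneg hc.le hNvq0]
    · have := key Nv q hq hNV0 hmN
      linarith [mul_nonneg hc.le hNup0]
  rw [hΦ]
  have h2p : 2 * (1/(2*p)) = 1/p := by field_simp
  have h2q : 2 * (1/(2*q)) = 1/q := by field_simp
  have hx1 : 0 ≤ (1/p - 2*c) * Nu ^ p :=
    mul_nonneg (by linarith : (0:ℝ) ≤ 1/p - 2*c) hNup0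
  have hx2 : 0 ≤ (1/q - 2*c) * Nv ^ q :=
    mul_nonneg (by linarith : (0:ℝ) ≤ 1/q - 2*c) hNvq0
  have hx3 : (1/p - 2*c) * Nu ^ p = 1/p * Nu ^ p - 2*(c * Nu ^ p) := by ring
  have hx4 : (1/q - 2*c) * Nv ^ q = 1/q * Nv ^ q - 2*(c * Nv ^ q) := by ring
  linarith
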